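/- For the Sobocinski (quasi) conjunction, property P1 fails: if A|H ⊆ B|K (Goodman–Nguyen inclusion) then (A|H) ∧_S (B|K) = (AH ∨ ¬HBK)|(H∨K), which differs from A|H whenever ¬HBK is possible (being true there while A|H is void). -/
import Mathlib


/-- The three truth values of de Finetti's trivalent logic. -/
inductive TV : Type
  | true : TV
  | false : TV
  | void : TV
deriving DecidableEq

open Classical in
/-- The conditional event `E|F`: true on `E∩F`, false on `Eᶜ∩F`, void on `Fᶜ`. -/
noncomputable def condEv {Ω : Type*} (E F : Set Ω) : Ω → TV := fun ω =>
  if ω ∈ F then (if ω ∈ E then TV.true else TV.false) else TV.void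

/-- The Sobociński (quasi) conjunction
`(A|H) ∧_S (B|K) = [(AH ∨ ¬H) ∧ (BK ∨ ¬K)] | (H ∨ K)`. -/
noncomputable def conjS {Ω : Type*} (A H B K : Set Ω) : Ω → TV :=
  condEv ((A ∩ H ∪ Hᶜ) ∩ (B ∩ K ∪ Kᶜ)) (H ∪ K)

/-- Failure of P1 for the Sobociński conjunction: under the Goodman–Nguyen
inclusion `A|H ⊆ B|K` (`AH ⊆ BK` and `¬BK ⊆ ¬AH`) one has
`(A|H) ∧_S (B|K) = (AH ∨ ¬HBK)|(H∨K)`, which differs from `A|H` whenever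
`¬HBK ≠ ∅` (being true there while `A|H` is void). -/
theorem sobocinski_fails_P1 {Ω : Type*} (A H B K : Set Ω)
    (hAB : A ∩ H ⊆ B ∩ K) (hBA : Bᶜ ∩ K ⊆ Aᶜ ∩ H)
    (hne : (Hᶜ ∩ B ∩ K).Nonempty) :
    conjS A H B K = condEv (A ∩ H ∪ Hᶜ ∩ B ∩ K) (H ∪ K) ∧
    conjS A H B K ≠ condEv A H := by

  obtain ⟨ω₀, hω₀⟩ := hne
  simp only [Set.mem_inter_iff, Set.mem_compl_iff] at hω₀
  constructor
  · funext ω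
    have h1 : ω ∈ A ∩ H → ω ∈ B ∩ K := @hAB ω
    have h2 : ω ∈ Bᶜ ∩ K → ω ∈ Aᶜ ∩ H := @hBA ω
    simp only [Set.mem_inter_iff, Set.mem_compl_iff] at h1 h2
    by_cases hH : ω ∈ H <;> by_cases hK : ω ∈ K <;> by_cases hA : ω ∈ A <;>
      by_cases hB : ω ∈ B <;>
      simp_all [conjS, condEv, Set.mem_union, Set.mem_inter_iff, Set.mem_compl_iff]
  · intro heq
    have := congrFun heq ω₀
    simp [conjS, condEv, hω₀.1.1, hω₀.1.2, hω₀.2] at this
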